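/- Let V be a CFT-type vertex operator algebra satisfying the C₂-cofiniteness condition and M a subspace with C₂(V) ⊆ M and 𝟙 ∉ M. Then M is a Mathieu-Zhao subspace of V with respect to the 0-th and (-1)-th products, and r_{0,-1}(M) = ⊕_{n=1}^∞ V_n. -/

import Mathlib

open scoped BigOperators

noncomputable section

/-- The generalized binomial coefficient `p choose i` for `p : ℤ`, as a complex number. -/
def zchoose (p : ℤ) (i : ℕ) : ℂ :=
  (∏ j ∈ Finset.range i, ((p : ℂ) - (j : ℂ))) / (i.factorial : ℂ)

/-- A vertex algebra over `ℂ`: a bilinear system of modes `u ↦ u_n`, a vacuum vector `𝟙`,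
truncation, vacuum/creation axioms and the Borcherds (Jacobi) identity. -/
structure VertexAlgebra (V : Type) [AddCommGroup V] [Module ℂ V] where
  mode : V → ℤ → V → V
  one : V
  mode_add_left : ∀ (u v : V) (n : ℤ) (w : V), mode (u + v) n w = mode u n w + mode v n w
  mode_smul_left : ∀ (c : ℂ) (u : V) (n : ℤ) (w : V), mode (c • u) n w = c • mode u n w
  mode_add_right : ∀ (u : V) (n : ℤ) (v w : V), mode u n (v + w) = mode u n v + mode u n w
  mode_smul_right : ∀ (u : V) (n : ℤ) (c : ℂ) (v : V), mode u n (c • v) = c • mode u n v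
  trunc : ∀ u v : V, ∃ N : ℤ, ∀ n ≥ N, mode u n v = 0
  vacuum_left : ∀ (n : ℤ) (v : V), mode one n v = if n = -1 then v else 0
  creation_nonneg : ∀ (u : V) (n : ℤ), 0 ≤ n → mode u n one = 0
  creation : ∀ u : V, mode u (-1) one = u
  borcherds : ∀ (u v w : V) (p q r : ℤ),
    ∑ᶠ i : ℕ, zchoose p i • mode (mode u (r + i) v) (p + q - i) w =
      ∑ᶠ i : ℕ, ((-1 : ℂ) ^ i * zchoose r i) •
        (mode u (p + r - i) (mode v (q + i) w) -
          ((-1 : ℂ) ^ r) • mode v (q + r - i) (mode u (p + i) w))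

/-- A list of mode indices all equal to `0` or `-1`. -/
def GoodIdx (ns : List ℤ) : Prop := ∀ n ∈ ns, n = 0 ∨ n = -1

namespace VertexAlgebra

variable {V : Type} [AddCommGroup V] [Module ℂ V] (VA : VertexAlgebra V)

/-- The translation operator `𝒟 v = v_{-2} 𝟙`. -/
def D (v : V) : V := VA.mode v (-2) VA.one

/-- `C₂(V) = span_ℂ { u_{-2} v }`. -/
def C2 : Submodule ℂ V := Submodule.span ℂ {w : V | ∃ u v : V, w = VA.mode u (-2) v}

/-- `Cₙ(V) = span_ℂ { u_{-n} v }`. -/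
def Cn (n : ℕ) : Submodule ℂ V :=
  Submodule.span ℂ {w : V | ∃ u v : V, w = VA.mode u (-(n : ℤ)) v}


/-- The iterated word `a_{n₁} a_{n₂} ⋯ a_{n_t} a`. -/
def word (a : V) (ns : List ℤ) : V := ns.foldr (fun n acc => VA.mode a n acc) a

/-- The radical `r_{0,-1}(M)` of a subspace `M` with respect to the 0-th and (-1)-th products. -/
def rad (M : Set V) : Set V :=
  {v : V | ∃ m : ℕ, ∀ ns : List ℤ, GoodIdx ns → m ≤ ns.length → VA.word v ns ∈ M}

/-- The left-strong radical `lsr_{0,-1}(M)`. -/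
def lsrad (M : Set V) : Set V :=
  {v : V | ∀ b : V, ∃ m : ℕ, ∀ (ns : List ℤ) (s : ℤ), GoodIdx ns → m ≤ ns.length →
    (s = 0 ∨ s = -1) → VA.mode b s (VA.word v ns) ∈ M}

/-- The right-strong radical `rsr_{0,-1}(M)`. -/
def rsrad (M : Set V) : Set V :=
  {v : V | ∀ w : V, ∃ m : ℕ, ∀ (ns : List ℤ) (s : ℤ), GoodIdx ns → m ≤ ns.length →
    (s = 0 ∨ s = -1) → VA.mode (VA.word v ns) s w ∈ M}

/-- The strong radical `sr_{0,-1}(M) = lsr_{0,-1}(M) ∩ rsr_{0,-1}(M)`. -/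
def srad (M : Set V) : Set V := VA.lsrad M ∩ VA.rsrad M

/-- `M` is a Mathieu-Zhao subspace of `V` with respect to the 0-th and (-1)-th products. -/
def IsMZ (M : Set V) : Prop := VA.rad M = VA.srad M

/-- A (two-sided) ideal of a vertex algebra. -/
def IsIdeal (I : Submodule ℂ V) : Prop :=
  ∀ (v w : V) (n : ℤ), w ∈ I → VA.mode v n w ∈ I ∧ VA.mode w n v ∈ I

/-- `t`-th power of `a` under the (-1)-th product: `a_{-1}(a_{-1}(⋯ a))`, with `pow a 0 = 𝟙`. -/
def pow (a : V) (t : ℕ) : V :=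
  Nat.rec VA.one (fun _ acc => VA.mode a (-1) acc) t

end VertexAlgebra

/-- A homomorphism of vertex algebras: a linear map preserving all modes and the vacuum. -/
def VertexAlgebra.IsHom {V W : Type} [AddCommGroup V] [Module ℂ V] [AddCommGroup W]
    [Module ℂ W] (VA : VertexAlgebra V) (WA : VertexAlgebra W) (f : V →ₗ[ℂ] W) : Prop :=
  f VA.one = WA.one ∧ ∀ (u v : V) (n : ℤ), f (VA.mode u n v) = WA.mode (f u) n (f v)

/-- A vertex operator algebra: a `ℤ`-graded vertex algebra with finite-dimensional
pieces, grading bounded below, and a conformal vector `ω` whose modes `L(n) = ω_{n+1}`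
satisfy the Virasoro relations, give the grading by `L(0)`, and realize `L(-1) = 𝒟`. -/
structure VertexOperatorAlgebra (V : Type) [AddCommGroup V] [Module ℂ V]
    extends VertexAlgebra V where
  grade : ℤ → Submodule ℂ V
  internal : DirectSum.IsInternal grade
  one_mem : one ∈ grade 0
  mode_grade : ∀ {k m n : ℤ} {u w : V}, u ∈ grade k → w ∈ grade n →
    mode u m w ∈ grade (k + n - m - 1)
  fin_dim : ∀ n : ℤ, FiniteDimensional ℂ (grade n)
  bounded_below : ∃ n₀ : ℤ, ∀ n < n₀, grade n = ⊥
  omega : V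
  omega_mem : omega ∈ grade 2
  central_charge : ℂ
  virasoro : ∀ (m n : ℤ) (v : V),
    mode omega (m + 1) (mode omega (n + 1) v) - mode omega (n + 1) (mode omega (m + 1) v) =
      ((m : ℂ) - (n : ℂ)) • mode omega (m + n + 1) v +
        (if m + n = 0 then (((m : ℂ) ^ 3 - (m : ℂ)) / 12) * central_charge else 0) • v
  L0_grading : ∀ (n : ℤ) (v : V), v ∈ grade n → mode omega 1 v = (n : ℂ) • v
  L_neg1 : ∀ v : V, mode omega 0 v = mode v (-2) one

namespace VertexAlgebra

variable {V : Type} [AddCommGroup V] [Module ℂ V] (VA : VertexAlgebra V)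

lemma zchoose_zero' (p : ℤ) : zchoose p 0 = 1 := by simp [zchoose]

lemma zchoose_one' (p : ℤ) : zchoose p 1 = p := by simp [zchoose]

lemma zchoose_zero_left {i : ℕ} (hi : i ≠ 0) : zchoose 0 i = 0 := by
  have : ((0:ℤ) : ℂ) - ((0:ℕ) : ℂ) = 0 := by norm_num
  simp only [zchoose]
  rw [Finset.prod_eq_zero (Finset.mem_range.2 (Nat.pos_of_ne_zero hi)) this, zero_div]

lemma mode_zero_left (n : ℤ) (w : V) : VA.mode 0 n w = 0 := by
  have h := VA.mode_smul_left 0 0 n w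
  simpa using h

lemma mode_zero_right (u : V) (n : ℤ) : VA.mode u n 0 = 0 := by
  have h := VA.mode_smul_right u n 0 0
  simpa using h

/-- derivation property of the 0-th mode -/
lemma deriv (u v w : V) (n : ℤ) :
    VA.mode (VA.mode u 0 v) n w
      = VA.mode u 0 (VA.mode v n w) - VA.mode v n (VA.mode u 0 w) := by
  have h := VA.borcherds u v w 0 n 0
  rw [finsum_eq_single _ 0 (fun i hi => by rw [zchoose_zero_left hi, zero_smul]),
      finsum_eq_single _ 0 (fun i hi => by rw [zchoose_zero_left hi, mul_zero, zero_smul])] at h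
  simpa [zchoose_zero'] using h

lemma Dmode (u : V) (p : ℤ) (w : V) :
    VA.mode (VA.D u) p w = -(p:ℂ) • VA.mode u (p-1) w := by
  have h := VA.borcherds u VA.one w p 0 (-2)
  have hL : ∀ i : ℕ, 2 ≤ i →
      zchoose p i • VA.mode (VA.mode u (-2 + (i:ℤ)) VA.one) (p + 0 - i) w = 0 := by
    intro i hi
    rw [VA.creation_nonneg _ _ (by omega), VA.mode_zero_left, smul_zero]
  rw [finsum_eq_finset_sum_of_support_subset _ (s := Finset.range 2)
      (fun i hi => by
        simp only [Finset.coe_range, Set.mem_Iio]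
        by_contra hk
        exact hi (hL i (by omega))),
      finsum_eq_zero_of_forall_eq_zero (fun i => by
        rw [VA.vacuum_left, VA.vacuum_left, if_neg (by omega), if_neg (by omega),
          VA.mode_zero_right]
        simp)] at h
  rw [Finset.sum_range_succ, Finset.sum_range_one] at h
  norm_num [zchoose_zero', zchoose_one', VA.creation] at h
  have h2 : VA.mode (VA.mode u (-2) VA.one) p w + (p:ℂ) • VA.mode u (p-1) w = 0 := by
    convert h using 3 <;> ring
  rw [VertexAlgebra.D]
  rw [add_eq_zero_iff_eq_neg] at h2
  rw [h2, neg_smul]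

lemma mem_C2_gen (u v : V) : VA.mode u (-2) v ∈ VA.C2 :=
  Submodule.subset_span ⟨u, v, rfl⟩

lemma mode_nat_neg_mem (k : ℕ) : ∀ (u w : V), VA.mode u (-2 - (k:ℤ)) w ∈ VA.C2 := by
  induction k with
  | zero => intro u w; simpa using VA.mem_C2_gen u w
  | succ k ih =>
    intro u w
    have hD := VA.Dmode u (-2 - (k:ℤ)) w
    have hcoef : (-((-2 - (k:ℤ) : ℤ) : ℂ)) = (k:ℂ) + 2 := by push_cast; ring
    have hne : ((k:ℂ) + 2) ≠ 0 := by
      have h2 : (((k+2:ℕ)):ℂ) ≠ 0 := Nat.cast_ne_zero.2 (by omega)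
      push_cast at h2
      exact h2
    have heq : VA.mode u (-2 - ((k:ℤ)+1)) w = ((k:ℂ)+2)⁻¹ • VA.mode (VA.D u) (-2 - (k:ℤ)) w := by
      rw [hD, hcoef]
      rw [smul_smul, inv_mul_cancel₀ hne, one_smul]
      congr 1
      ring
    rw [show (-2 - ((k:ℕ)+1:ℕ) : ℤ) = -2 - ((k:ℤ)+1) by push_cast; ring, heq]
    exact Submodule.smul_mem _ _ (ih (VA.D u) w)

lemma mode_neg_mem {n : ℤ} (hn : n ≤ -2) (u w : V) : VA.mode u n w ∈ VA.C2 := by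
  have : n = -2 - ((-2 - n).toNat : ℤ) := by omega
  rw [this]; exact VA.mode_nat_neg_mem _ u w

end VertexAlgebra

namespace VertexAlgebra

variable {V : Type} [AddCommGroup V] [Module ℂ V] (VA : VertexAlgebra V)

/-- Skew symmetry modulo `C₂`. -/
lemma skew (u v : V) (r : ℤ) :
    VA.mode u r v + ((-1:ℂ)^r) • VA.mode v r u ∈ VA.C2 := by
  have h := VA.borcherds u v VA.one (-1) 0 r
  -- bound the support of the LHS
  obtain ⟨N, hN⟩ := VA.trunc u v
  rw [finsum_eq_finset_sum_of_support_subset _ (s := Finset.range ((N - r).toNat + 1))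
      (fun i hi => by
        simp only [Finset.coe_range, Set.mem_Iio]
        by_contra hk
        apply hi
        beta_reduce
        rw [hN (r + (i:ℤ)) (by omega), VA.mode_zero_left, smul_zero])] at h
  -- collapse the RHS to the i = 0 term
  rw [finsum_eq_single _ 0 (fun i hi => by
    rw [VA.creation_nonneg v ((0:ℤ) + (i:ℤ)) (by omega), VA.mode_zero_right,
      VA.creation_nonneg u ((-1:ℤ) + (i:ℤ)) (by omega), VA.mode_zero_right]
    simp)] at h
  simp only [Nat.cast_zero, add_zero, zero_add, sub_zero, zchoose_zero', pow_zero, one_mul,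
    one_smul, VA.creation_nonneg v 0 le_rfl, VA.mode_zero_right, zero_sub, VA.creation] at h
  rw [Finset.sum_range_succ'] at h
  simp only [Nat.cast_zero, add_zero, sub_zero, zchoose_zero', one_smul, VA.creation] at h
  have h5 : (VA.mode u r v + ((-1:ℂ)^r) • VA.mode v r u)
      + (∑ x ∈ Finset.range (N - r).toNat,
          zchoose (-1) (x+1) • VA.mode (VA.mode u (r + ((x+1 : ℕ) : ℤ)) v)
            (-1 - ((x+1 : ℕ) : ℤ)) VA.one) = 0 := by
    linear_combination (norm := abel) h
  have h6 : VA.mode u r v + ((-1:ℂ)^r) • VA.mode v r u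
      = -(∑ x ∈ Finset.range (N - r).toNat,
          zchoose (-1) (x+1) • VA.mode (VA.mode u (r + ((x+1 : ℕ) : ℤ)) v)
            (-1 - ((x+1 : ℕ) : ℤ)) VA.one) := eq_neg_of_add_eq_zero_left h5
  rw [h6]
  exact Submodule.neg_mem _ (Submodule.sum_mem _ (fun i _ => Submodule.smul_mem _ _
    (VA.mode_neg_mem (by omega) _ _)))

/-- `C₂` is a left ideal for the nonpositive modes. -/
lemma C2_mode_left {c : V} (hc : c ∈ VA.C2) (q : ℤ) (hq : q ≤ 0) (x : V) :
    VA.mode c q x ∈ VA.C2 := by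
  -- the set of `c` with this property is a submodule
  let S : Submodule ℂ V :=
    { carrier := {c | VA.mode c q x ∈ VA.C2}
      add_mem' := fun {a b} ha hb => by
        simp only [Set.mem_setOf_eq, VA.mode_add_left] at *
        exact Submodule.add_mem _ ha hb
      zero_mem' := by simp [VA.mode_zero_left]
      smul_mem' := fun t a ha => by
        simp only [Set.mem_setOf_eq, VA.mode_smul_left] at *
        exact Submodule.smul_mem _ _ ha }
  suffices hS : VA.C2 ≤ S from hS hc
  rw [VertexAlgebra.C2, Submodule.span_le]
  rintro _ ⟨a, b, rfl⟩
  show VA.mode (VA.mode a (-2) b) q x ∈ VA.C2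
  have h := VA.borcherds a b x 0 q (-2)
  rw [finsum_eq_single _ 0 (fun i hi => by rw [zchoose_zero_left hi, zero_smul])] at h
  simp only [Nat.cast_zero, add_zero, sub_zero, zchoose_zero', one_smul] at h
  rw [show (0 + q : ℤ) = q by ring] at h
  rw [h]
  -- each term of the RHS finsum lies in C₂
  obtain ⟨N1, hN1⟩ := VA.trunc b x
  obtain ⟨N2, hN2⟩ := VA.trunc a x
  set K : ℕ := ((max N1 N2) - q).toNat + ((max N1 N2)).toNat + 1 with hK
  rw [finsum_eq_finset_sum_of_support_subset _ (s := Finset.range K)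
      (fun i hi => by
        simp only [Finset.coe_range, Set.mem_Iio]
        by_contra hk
        apply hi
        beta_reduce
        rw [hN1 (q + (i:ℤ)) (by omega), VA.mode_zero_right, hN2 ((0:ℤ) + (i:ℤ)) (by omega),
          VA.mode_zero_right]
        simp)]
  refine Submodule.sum_mem _ (fun i _ => Submodule.smul_mem _ _ (Submodule.sub_mem _ ?_ (Submodule.smul_mem _ _ ?_)))
  · exact VA.mode_neg_mem (by omega) _ _
  · exact VA.mode_neg_mem (by omega) _ _

/-- `C₂` is a right ideal for the nonpositive modes. -/
lemma C2_mode_right {c : V} (hc : c ∈ VA.C2) (q : ℤ) (hq : q ≤ 0) (x : V) :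
    VA.mode x q c ∈ VA.C2 := by
  have hs := VA.skew x c q
  have h1 := VA.C2_mode_left hc q hq x
  have : VA.mode x q c
      = (VA.mode x q c + ((-1:ℂ)^q) • VA.mode c q x) - ((-1:ℂ)^q) • VA.mode c q x := by abel
  rw [this]
  exact Submodule.sub_mem _ hs (Submodule.smul_mem _ _ h1)

lemma mode_self_zero_mem (v : V) : VA.mode v 0 v ∈ VA.C2 := by
  have hs := VA.skew v v 0
  rw [zpow_zero, one_smul] at hs
  have : VA.mode v 0 v = (2:ℂ)⁻¹ • (VA.mode v 0 v + VA.mode v 0 v) := by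
    rw [← two_smul ℂ, smul_smul]
    norm_num
  rw [this]
  exact Submodule.smul_mem _ _ hs

@[simp] lemma pow_zero' (a : V) : VA.pow a 0 = VA.one := rfl

@[simp] lemma pow_succ' (a : V) (t : ℕ) : VA.pow a (t+1) = VA.mode a (-1) (VA.pow a t) := rfl

lemma mode_zero_pow_mem (v : V) (k : ℕ) : VA.mode v 0 (VA.pow v k) ∈ VA.C2 := by
  induction k with
  | zero => rw [pow_zero', VA.creation_nonneg v 0 le_rfl]; exact Submodule.zero_mem _
  | succ k ih =>
    rw [pow_succ']
    have hd := VA.deriv v v (VA.pow v k) (-1)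
    have : VA.mode v 0 (VA.mode v (-1) (VA.pow v k))
        = VA.mode (VA.mode v 0 v) (-1) (VA.pow v k) + VA.mode v (-1) (VA.mode v 0 (VA.pow v k)) := by
      rw [hd]; abel
    rw [this]
    exact Submodule.add_mem _
      (VA.C2_mode_left (VA.mode_self_zero_mem v) (-1) (by omega) _)
      (VA.C2_mode_right ih (-1) (by omega) v)

lemma mode_sum_left {ι : Type} (s : Finset ι) (f : ι → V) (n : ℤ) (a : V) :
    VA.mode (∑ k ∈ s, f k) n a = ∑ k ∈ s, VA.mode (f k) n a := by
  classical
  induction s using Finset.induction with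
  | empty => simp [VA.mode_zero_left]
  | insert _ _ hm ih => rw [Finset.sum_insert hm, Finset.sum_insert hm, VA.mode_add_left, ih]

lemma mode_sum_right {ι : Type} (s : Finset ι) (f : ι → V) (n : ℤ) (a : V) :
    VA.mode a n (∑ k ∈ s, f k) = ∑ k ∈ s, VA.mode a n (f k) := by
  classical
  induction s using Finset.induction with
  | empty => simp [VA.mode_zero_right]
  | insert _ _ hm ih => rw [Finset.sum_insert hm, Finset.sum_insert hm, VA.mode_add_right, ih]

@[simp] lemma word_nil (a : V) : VA.word a [] = a := rfl

@[simp] lemma word_cons (a : V) (n : ℤ) (ns : List ℤ) :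
    VA.word a (n :: ns) = VA.mode a n (VA.word a ns) := rfl

lemma word_replicate (a : V) (t : ℕ) :
    VA.word a (List.replicate t (-1)) = VA.pow a (t+1) := by
  induction t with
  | zero => simp [VA.creation]
  | succ t ih => rw [List.replicate_succ, word_cons, ih]; rfl

/-- Structure of good words: either in `C₂`, or a power. -/
lemma word_good (v : V) (ns : List ℤ) (h : GoodIdx ns) :
    VA.word v ns ∈ VA.C2 ∨ VA.word v ns = VA.pow v (ns.length + 1) := by
  induction ns with
  | nil => right; simp [VA.creation]
  | cons n tl ih =>
    have htl : GoodIdx tl := fun m hm => h m (List.mem_cons_of_mem _ hm)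
    have hn : n = 0 ∨ n = -1 := h n (List.mem_cons_self)
    rcases ih htl with hc | hp
    · left
      rw [word_cons]
      rcases hn with rfl | rfl
      · exact VA.C2_mode_right hc 0 le_rfl v
      · exact VA.C2_mode_right hc (-1) (by omega) v
    · rcases hn with rfl | rfl
      · left
        rw [word_cons, hp]
        exact VA.mode_zero_pow_mem v _
      · right
        rw [word_cons, hp]
        simp [List.length_cons]

end VertexAlgebra

namespace VertexOperatorAlgebra

open DirectSum

variable {V : Type} [AddCommGroup V] [Module ℂ V] (W : VertexOperatorAlgebra V)

/-- The grading equivalence. -/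
noncomputable def gequiv : (⨁ n : ℤ, ↥(W.grade n)) ≃ₗ[ℂ] V :=
  LinearEquiv.ofBijective (DirectSum.coeLinearMap W.grade) W.internal

/-- Projection onto the `n`-th graded piece. -/
noncomputable def proj (n : ℤ) : V →ₗ[ℂ] V :=
  (W.grade n).subtype ∘ₗ (DirectSum.component ℂ ℤ (fun i => ↥(W.grade i)) n) ∘ₗ
    (W.gequiv.symm : V →ₗ[ℂ] (⨁ n : ℤ, ↥(W.grade n)))

lemma proj_apply (n : ℤ) (x : V) : W.proj n x = ↑((W.gequiv.symm x) n) := rfl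

lemma proj_mem (n : ℤ) (x : V) : W.proj n x ∈ W.grade n := (W.gequiv.symm x n).2

lemma gequiv_symm_of_mem {n : ℤ} {x : V} (hx : x ∈ W.grade n) :
    W.gequiv.symm x = DirectSum.of (fun i => ↥(W.grade i)) n ⟨x, hx⟩ := by
  rw [LinearEquiv.symm_apply_eq]
  show x = W.gequiv (DirectSum.of (fun i => ↥(W.grade i)) n ⟨x, hx⟩)
  rw [gequiv]
  show x = DirectSum.coeLinearMap W.grade (DirectSum.of (fun i => ↥(W.grade i)) n ⟨x, hx⟩)
  rw [DirectSum.coeLinearMap_of]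

lemma proj_of_mem_same {n : ℤ} {x : V} (hx : x ∈ W.grade n) : W.proj n x = x := by
  rw [proj_apply, W.gequiv_symm_of_mem hx, DirectSum.of_eq_same]

lemma proj_of_mem_ne {m n : ℤ} {x : V} (hx : x ∈ W.grade m) (hmn : m ≠ n) :
    W.proj n x = 0 := by
  rw [proj_apply, W.gequiv_symm_of_mem hx, DirectSum.of_eq_of_ne _ _ _ hmn.symm]
  rfl

lemma exists_sum_proj (x : V) : ∃ s : Finset ℤ, x = ∑ n ∈ s, W.proj n x := by
  classical
  refine ⟨(W.gequiv.symm x).support, ?_⟩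
  conv_lhs => rw [← W.gequiv.apply_symm_apply x]
  rw [show W.gequiv (W.gequiv.symm x) = DirectSum.coeLinearMap W.grade (W.gequiv.symm x) from rfl]
  conv_lhs => rw [← DirectSum.sum_support_of (W.gequiv.symm x)]
  rw [map_sum]
  exact Finset.sum_congr rfl (fun n _ => DirectSum.coeLinearMap_of _ _ _)

/-- `C₂` is a graded submodule. -/
lemma C2_graded {x : V} (hx : x ∈ W.toVertexAlgebra.C2) (n : ℤ) :
    W.proj n x ∈ W.toVertexAlgebra.C2 := by
  revert n
  let S : Submodule ℂ V :=
    { carrier := {x | ∀ n, W.proj n x ∈ W.toVertexAlgebra.C2}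
      add_mem' := fun {a b} ha hb n => by
        rw [map_add]; exact Submodule.add_mem _ (ha n) (hb n)
      zero_mem' := fun n => by rw [map_zero]; exact Submodule.zero_mem _
      smul_mem' := fun t a ha n => by
        rw [map_smul]; exact Submodule.smul_mem _ _ (ha n) }
  suffices hS : x ∈ S from hS
  refine Submodule.span_le.2 ?_ hx
  rintro _ ⟨u, w, rfl⟩
  intro n
  obtain ⟨su, hsu⟩ := W.exists_sum_proj u
  obtain ⟨sw, hsw⟩ := W.exists_sum_proj w
  have hexp : W.mode u (-2) w
      = ∑ k ∈ su, ∑ j ∈ sw, W.mode (W.proj k u) (-2) (W.proj j w) := by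
    conv_lhs => rw [hsu]
    rw [W.toVertexAlgebra.mode_sum_left]
    refine Finset.sum_congr rfl (fun k _ => ?_)
    conv_lhs => rw [hsw]
    rw [W.toVertexAlgebra.mode_sum_right]
  rw [hexp, map_sum]
  refine Submodule.sum_mem _ (fun k _ => ?_)
  rw [map_sum]
  refine Submodule.sum_mem _ (fun j _ => ?_)
  have hg : W.mode (W.proj k u) (-2) (W.proj j w) ∈ W.grade (k + j - (-2) - 1) :=
    W.mode_grade (W.proj_mem k u) (W.proj_mem j w)
  have hc : W.mode (W.proj k u) (-2) (W.proj j w) ∈ W.toVertexAlgebra.C2 :=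
    W.toVertexAlgebra.mem_C2_gen _ _
  by_cases hn : k + j - (-2) - 1 = n
  · rw [W.proj_of_mem_same (hn ▸ hg)]; exact hc
  · rw [W.proj_of_mem_ne hg hn]; exact Submodule.zero_mem _

end VertexOperatorAlgebra

namespace VertexOperatorAlgebra

variable {V : Type} [AddCommGroup V] [Module ℂ V] (W : VertexOperatorAlgebra V)

lemma grade_le_C2_bound (hc2 : FiniteDimensional ℂ (V ⧸ W.toVertexAlgebra.C2)) :
    ∃ N : ℤ, ∀ n : ℤ, N ≤ n → W.grade n ≤ W.toVertexAlgebra.C2 := by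
  classical
  have hfin : {n : ℤ | ¬ W.grade n ≤ W.toVertexAlgebra.C2}.Finite := by
    by_contra hinf
    obtain ⟨F, hFS, hcard⟩ :=
      Set.Infinite.exists_subset_card_eq hinf (Module.finrank ℂ (V ⧸ W.toVertexAlgebra.C2) + 1)
    have hchoice : ∀ n : F, ∃ x : V, x ∈ W.grade (n:ℤ) ∧ x ∉ W.toVertexAlgebra.C2 := by
      rintro ⟨n, hn⟩
      have h1 : ¬ W.grade n ≤ W.toVertexAlgebra.C2 := hFS hn
      rw [SetLike.not_le_iff_exists] at h1
      obtain ⟨x, hx1, hx2⟩ := h1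
      exact ⟨x, hx1, hx2⟩
    choose x hx1 hx2 using hchoice
    have hli : LinearIndependent ℂ
        (fun n : F => (W.toVertexAlgebra.C2).mkQ (x n)) := by
      rw [linearIndependent_iff']
      intro s g hsum i hi
      have hz : (∑ j ∈ s, g j • x j) ∈ W.toVertexAlgebra.C2 := by
        rw [← Submodule.Quotient.mk_eq_zero]
        rw [show (Submodule.Quotient.mk (∑ j ∈ s, g j • x j) : V ⧸ W.toVertexAlgebra.C2)
            = ∑ j ∈ s, g j • (W.toVertexAlgebra.C2).mkQ (x j) by
          rw [← Submodule.mkQ_apply, map_sum]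
          exact Finset.sum_congr rfl (fun j _ => by rw [map_smul])]
        exact hsum
      have hp := W.C2_graded hz (i : ℤ)
      have hproj : W.proj (i:ℤ) (∑ j ∈ s, g j • x j) = g i • x i := by
        rw [map_sum]
        rw [Finset.sum_eq_single i]
        · rw [map_smul, W.proj_of_mem_same (hx1 i)]
        · intro j _ hji
          rw [map_smul, W.proj_of_mem_ne (hx1 j) (by exact_mod_cast Subtype.coe_injective.ne hji),
            smul_zero]
        · intro his; exact absurd hi his
      rw [hproj] at hp
      by_contra hgi
      exact hx2 i (by
        have := Submodule.smul_mem _ (g i)⁻¹ hp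
        rwa [smul_smul, inv_mul_cancel₀ hgi, one_smul] at this)
    have hcardle := hli.fintype_card_le_finrank
    rw [Fintype.card_coe, hcard] at hcardle
    omega
  obtain ⟨b, hb⟩ := hfin.bddAbove
  refine ⟨b + 1, fun n hn => ?_⟩
  by_contra hcon
  have : n ≤ b := hb hcon
  omega

/-- The filtration `G a = ⨆_{n ≥ a} V_n`. -/
def Gq (a : ℤ) : Submodule ℂ V := ⨆ (n : ℤ) (_ : a ≤ n), W.grade n

lemma grade_le_Gq {a n : ℤ} (h : a ≤ n) : W.grade n ≤ W.Gq a :=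
  le_iSup₂ (f := fun (n : ℤ) (_ : a ≤ n) => W.grade n) n h

lemma mode_Gq_mem {a b : ℤ} {x y : V} (hx : x ∈ W.Gq a) (hy : y ∈ W.Gq b) :
    W.mode x (-1) y ∈ W.Gq (a + b) := by
  have hx' : x ∈ ⨆ (n : {m : ℤ // a ≤ m}), W.grade n := by
    rwa [Gq, iSup_subtype'] at hx
  refine Submodule.iSup_induction' (motive := fun x _ => W.mode x (-1) y ∈ W.Gq (a + b)) _
    (fun p xp hxp => ?_) ?_ (fun u v _ _ hu hv => ?_) hx'
  · -- x homogeneous of degree p ≥ a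
    clear hx hx'
    have hy' : y ∈ ⨆ (n : {m : ℤ // b ≤ m}), W.grade n := by
      rwa [Gq, iSup_subtype'] at hy
    refine Submodule.iSup_induction'
      (motive := fun y _ => W.mode xp (-1) y ∈ W.Gq (a + b)) _
      (fun q yq hyq => ?_) ?_ (fun u v _ _ hu hv => ?_) hy'
    · have := W.mode_grade (m := -1) hxp hyq
      have heq : ((p:ℤ) + q - (-1) - 1) = (p:ℤ) + (q:ℤ) := by ring
      rw [heq] at this
      exact W.grade_le_Gq (add_le_add p.2 q.2) this
    · show W.mode xp (-1) 0 ∈ W.Gq (a + b)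
      rw [W.toVertexAlgebra.mode_zero_right]; exact Submodule.zero_mem _
    · show W.mode xp (-1) (u + v) ∈ W.Gq (a + b)
      rw [W.mode_add_right]; exact Submodule.add_mem _ hu hv
  · show W.mode 0 (-1) y ∈ W.Gq (a + b)
    rw [W.toVertexAlgebra.mode_zero_left]; exact Submodule.zero_mem _
  · show W.mode (u + v) (-1) y ∈ W.Gq (a + b)
    rw [W.mode_add_left]; exact Submodule.add_mem _ hu hv

lemma pow_Gq_mem {x : V} (hx : x ∈ W.Gq 1) (k : ℕ) (hk : 1 ≤ k) :
    W.toVertexAlgebra.pow x k ∈ W.Gq (k : ℤ) := by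
  induction k with
  | zero => omega
  | succ k ih =>
    rcases Nat.eq_or_lt_of_le hk with h1 | h1
    · have : k = 0 := by omega
      subst this
      simpa [W.toVertexAlgebra.creation] using hx
    · have hk1 : 1 ≤ k := by omega
      have := W.mode_Gq_mem hx (ih hk1)
      rw [VertexAlgebra.pow_succ']
      convert this using 2
      push_cast; ring

lemma Gq_le_C2 {N : ℤ} (hN : ∀ n : ℤ, N ≤ n → W.grade n ≤ W.toVertexAlgebra.C2)
    {a : ℤ} (ha : N ≤ a) : W.Gq a ≤ W.toVertexAlgebra.C2 :=
  iSup_le (fun n => iSup_le (fun hn => hN n (le_trans ha hn)))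

/-- Decomposition `x = c·𝟙 + (positive part)` in a CFT-type VOA. -/
lemma exists_decomp (hneg : ∀ n : ℤ, n < 0 → W.grade n = ⊥)
    (hzero : W.grade 0 = Submodule.span ℂ {W.one}) (x : V) :
    ∃ (c : ℂ) (y : V), y ∈ W.Gq 1 ∧ x = c • W.one + y := by
  have htop : (⊤ : Submodule ℂ V) ≤ W.grade 0 ⊔ W.Gq 1 := by
    rw [← W.internal.submodule_iSup_eq_top]
    refine iSup_le (fun n => ?_)
    rcases lt_trichotomy n 0 with h | h | h
    · rw [hneg n h]; exact bot_le
    · subst h; exact le_sup_left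
    · exact le_trans (W.grade_le_Gq h) le_sup_right
  obtain ⟨y, hy, z, hz, hyz⟩ := Submodule.mem_sup.1 (htop (Submodule.mem_top (x := x)))
  rw [hzero, Submodule.mem_span_singleton] at hy
  obtain ⟨c, rfl⟩ := hy
  exact ⟨c, z, hz, hyz.symm⟩

end VertexOperatorAlgebra

namespace VertexAlgebra

variable {V : Type} [AddCommGroup V] [Module ℂ V] (VA : VertexAlgebra V)

/-- Left multiplication (the `(-1)`-th product) as an endomorphism. -/
noncomputable def lmul (a : V) : Module.End ℂ V :=
  { toFun := fun x => VA.mode a (-1) x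
    map_add' := VA.mode_add_right a (-1)
    map_smul' := fun c x => VA.mode_smul_right a (-1) c x }

@[simp] lemma lmul_apply (a x : V) : VA.lmul a x = VA.mode a (-1) x := rfl

lemma pow_eq_lmul_pow (a : V) (t : ℕ) : VA.pow a t = ((VA.lmul a)^t) VA.one := by
  induction t with
  | zero => simp
  | succ t ih => rw [pow_succ', ih, _root_.pow_succ', Module.End.mul_apply, lmul_apply]

lemma lmul_decomp (c : ℂ) (y : V) :
    VA.lmul (c • VA.one + y) = VA.lmul y + c • (1 : Module.End ℂ V) := by
  ext x
  simp only [lmul_apply, LinearMap.add_apply, LinearMap.smul_apply, Module.End.one_apply,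
    VA.mode_add_left, VA.mode_smul_left, VA.vacuum_left, if_pos rfl, ↓reduceIte]
  abel

lemma pow_expand (c : ℂ) (y : V) (t : ℕ) :
    VA.pow (c • VA.one + y) t
      = ∑ k ∈ Finset.range (t+1), ((t.choose k : ℂ)) • c^(t-k) • VA.pow y k := by
  have hcomm : Commute (VA.lmul y) (c • (1 : Module.End ℂ V)) :=
    (Commute.one_right (VA.lmul y)).smul_right c
  rw [pow_eq_lmul_pow, lmul_decomp, hcomm.add_pow t, LinearMap.sum_apply]
  refine Finset.sum_congr rfl (fun k hk => ?_)
  rw [Module.End.mul_apply, Module.End.mul_apply, Module.End.natCast_apply, smul_pow, one_pow,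
    LinearMap.smul_apply, Module.End.one_apply, map_smul, map_nsmul, ← pow_eq_lmul_pow,
    Nat.cast_smul_eq_nsmul ℂ]
  rw [smul_comm]

end VertexAlgebra

/-- Linear-algebra extraction: from binomially-weighted sums in `M`, extract `u 0 ∈ M`. -/
lemma mz_extract {V : Type} [AddCommGroup V] [Module ℂ V] (M : Submodule ℂ V)
    (u : ℕ → V) (c : ℂ) (hc : c ≠ 0) (N T : ℕ) (hNT : N ≤ T)
    (hN : ∀ k, N ≤ k → u k ∈ M)
    (hy : ∀ s : ℕ, (∑ k ∈ Finset.range N, (((T+s).choose k : ℂ)) • c^(T+s-k) • u k) ∈ M) :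
    u 0 ∈ M := by
  classical
  set Z : ℕ → ℕ → V := fun j => Nat.rec
    (fun s => ∑ k ∈ Finset.range N, (((T+s).choose k : ℂ)) • c^(T+s-k) • u k)
    (fun _ Zj s => Zj (s+1) - c • Zj s) j with hZ
  have hZ0 : ∀ s, Z 0 s = ∑ k ∈ Finset.range N, (((T+s).choose k : ℂ)) • c^(T+s-k) • u k :=
    fun s => rfl
  have hZsucc : ∀ j s, Z (j+1) s = Z j (s+1) - c • Z j s := fun j s => rfl
  have hZM : ∀ j s, Z j s ∈ M := by
    intro j
    induction j with
    | zero => exact hy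
    | succ j ih =>
      intro s; rw [hZsucc]
      exact Submodule.sub_mem _ (ih _) (Submodule.smul_mem _ _ (ih _))
  have hZform : ∀ j, j ≤ N → ∀ s, Z j s
      = ∑ k ∈ Finset.range (N - j), (((T+s).choose k : ℂ)) • c^(T+s-k) • u (k+j) := by
    intro j
    induction j with
    | zero => intro _ s; rw [hZ0]; simp
    | succ j ih =>
      intro hjN s
      rw [hZsucc, ih (by omega), ih (by omega)]
      obtain ⟨d, hd⟩ : ∃ d, N - j = d + 1 := ⟨N - j - 1, by omega⟩
      rw [hd, show N - (j+1) = d by omega]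
      rw [Finset.smul_sum, ← Finset.sum_sub_distrib, Finset.sum_range_succ']
      have h0 : (((T+(s+1)).choose 0 : ℂ)) • c^(T+(s+1)-0) • u (0+j)
          - c • ((((T+s).choose 0 : ℂ)) • c^(T+s-0) • u (0+j)) = 0 := by
        simp only [Nat.choose_zero_right, Nat.cast_one, one_smul, Nat.sub_zero]
        rw [smul_smul, ← _root_.pow_succ', show T+(s+1) = (T+s)+1 by omega, sub_self]
      rw [h0, add_zero]
      refine Finset.sum_congr rfl (fun i hi => ?_)
      have hid : i < d := Finset.mem_range.1 hi
      have e1 : T + (s+1) - (i+1) = T + s - i := by omega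
      have e2 : (((T+(s+1)).choose (i+1)) : ℂ)
          = ((T+s).choose i : ℂ) + ((T+s).choose (i+1) : ℂ) := by
        rw [show T+(s+1) = (T+s)+1 by omega, Nat.choose_succ_succ]
        push_cast; ring
      have e3 : c • ((((T+s).choose (i+1) : ℂ)) • c^(T+s-(i+1)) • u (i+1+j))
          = (((T+s).choose (i+1) : ℂ)) • c^(T+s-i) • u (i+1+j) := by
        rw [smul_comm c, smul_smul c, ← _root_.pow_succ', show T+s-(i+1)+1 = T+s-i by omega]
      rw [e1, e2, e3, add_smul, add_sub_cancel_right, show i+1+j = i+(j+1) by omega]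
  have hdown : ∀ d j, N ≤ j + d → u j ∈ M := by
    intro d
    induction d with
    | zero => intro j hj; exact hN j (by omega)
    | succ d ih =>
      intro j hj
      by_cases hjd : N ≤ j + d
      · exact ih j hjd
      · have hjN : N - j = d + 1 := by omega
        have hZj := hZM j 0
        rw [hZform j (by omega) 0, hjN, Finset.sum_range_succ'] at hZj
        have hsum : (∑ i ∈ Finset.range d,
            (((T+0).choose (i+1) : ℂ)) • c^(T+0-(i+1)) • u ((i+1)+j)) ∈ M :=
          Submodule.sum_mem _ (fun i _ => Submodule.smul_mem _ _ (Submodule.smul_mem _ _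
            (ih _ (by omega))))
        have h2 : (((T+0).choose 0 : ℂ)) • c^(T+0-0) • u (0+j) ∈ M := by
          have h3 := Submodule.sub_mem _ hZj hsum
          simpa using h3
        simp only [Nat.choose_zero_right, Nat.cast_one, one_smul, Nat.add_zero, Nat.sub_zero,
          Nat.zero_add] at h2
        have h4 := Submodule.smul_mem _ (c^T)⁻¹ h2
        rwa [smul_smul, inv_mul_cancel₀ (pow_ne_zero _ hc), one_smul] at h4
  exact hdown N 0 (by omega)

/-- Let `V` be a CFT-type `C₂`-cofinite vertex operator algebra and `M` a
subspace with `C₂(V) ⊆ M` and `𝟙 ∉ M`. Then `M` is a MZ_{0,-1}-subspace of `V` and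
`r_{0,-1}(M) = ⊕_{n ≥ 1} V_n`. -/
theorem stmt18 {V : Type} [AddCommGroup V] [Module ℂ V] (VOA : VertexOperatorAlgebra V)
    (hneg : ∀ n : ℤ, n < 0 → VOA.grade n = ⊥)
    (hzero : VOA.grade 0 = Submodule.span ℂ {VOA.one})
    (hc2 : FiniteDimensional ℂ (V ⧸ VOA.toVertexAlgebra.C2))
    (M : Submodule ℂ V) (hM : VOA.toVertexAlgebra.C2 ≤ M) (hone : VOA.one ∉ M) :
    VOA.toVertexAlgebra.IsMZ (M : Set V) ∧
    VOA.toVertexAlgebra.rad (M : Set V) =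
      ((⨆ (n : ℤ) (_ : 1 ≤ n), VOA.grade n : Submodule ℂ V) : Set V) := by
  classical
  set VA := VOA.toVertexAlgebra with hVAdef
  obtain ⟨N₀, hN₀⟩ := VOA.grade_le_C2_bound hc2
  have hPGq : (⨆ (n : ℤ) (_ : 1 ≤ n), VOA.grade n : Submodule ℂ V) = VOA.Gq 1 := rfl
  set Nn : ℕ := max N₀.toNat 1 with hNn
  -- nilpotency of the positive part
  have hnil : ∀ y ∈ VOA.Gq 1, ∀ k : ℕ, Nn ≤ k → VA.pow y k ∈ VA.C2 := by
    intro y hy k hk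
    have h1 : VA.pow y k ∈ VOA.Gq (k : ℤ) := VOA.pow_Gq_mem hy k (by omega)
    exact VOA.Gq_le_C2 hN₀ (by omega) h1
  -- long good words of positive elements lie in C₂
  have hword : ∀ y ∈ VOA.Gq 1, ∀ ns : List ℤ, GoodIdx ns → Nn ≤ ns.length →
      VA.word y ns ∈ VA.C2 := by
    intro y hy ns hg hlen
    rcases VA.word_good y ns hg with h | h
    · exact h
    · rw [h]; exact hnil y hy _ (by omega)
  -- positive part is contained in the radical
  have hPrad : (VOA.Gq 1 : Set V) ⊆ VA.rad (M : Set V) := by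
    intro y hy
    exact ⟨Nn, fun ns hg hlen => hM (hword y hy ns hg hlen)⟩
  -- positive part is contained in the left strong radical
  have hPlsrad : (VOA.Gq 1 : Set V) ⊆ VA.lsrad (M : Set V) := by
    intro y hy b
    refine ⟨Nn, fun ns s hg hlen hs => ?_⟩
    exact hM (VA.C2_mode_right (hword y hy ns hg hlen) s
      (by rcases hs with rfl | rfl <;> omega) b)
  -- positive part is contained in the right strong radical
  have hPrsrad : (VOA.Gq 1 : Set V) ⊆ VA.rsrad (M : Set V) := by
    intro y hy w
    refine ⟨Nn, fun ns s hg hlen hs => ?_⟩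
    exact hM (VA.C2_mode_left (hword y hy ns hg hlen) s
      (by rcases hs with rfl | rfl <;> omega) w)
  -- radical is contained in the positive part
  have hradP : VA.rad (M : Set V) ⊆ (VOA.Gq 1 : Set V) := by
    intro v hv
    obtain ⟨m, hm⟩ := hv
    obtain ⟨c, y, hy, hvy⟩ := VOA.exists_decomp hneg hzero v
    by_cases hc : c = 0
    · subst hc
      rw [zero_smul, zero_add] at hvy
      rw [hvy]
      exact hy
    · exfalso
      have hpowM : ∀ t : ℕ, m + 1 ≤ t → VA.pow v t ∈ M := by
        intro t ht
        have h1 := hm (List.replicate (t-1) (-1))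
          (fun n hn => Or.inr (List.eq_of_mem_replicate hn))
          (by rw [List.length_replicate]; omega)
        rwa [VA.word_replicate, show t - 1 + 1 = t by omega] at h1
      set T : ℕ := max (m+1) Nn with hT
      apply hone
      have hu0 : VA.pow y 0 = VA.one := rfl
      rw [← hu0]
      refine mz_extract M (VA.pow y) c hc Nn T (by omega) (fun k hk => hM (hnil y hy k hk)) ?_
      intro s
      have hexp := VA.pow_expand c y (T+s)
      rw [← hvy] at hexp
      have hsplit : ∑ k ∈ Finset.range (T+s+1), (((T+s).choose k : ℂ)) • c^(T+s-k) • VA.pow y k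
          = (∑ k ∈ Finset.range Nn, (((T+s).choose k : ℂ)) • c^(T+s-k) • VA.pow y k)
            + ∑ k ∈ Finset.Ico Nn (T+s+1), (((T+s).choose k : ℂ)) • c^(T+s-k) • VA.pow y k := by
        rw [Finset.range_eq_Ico, Finset.range_eq_Ico]
        exact Eq.symm (Finset.sum_Ico_consecutive _ (by omega : 0 ≤ Nn) (by omega : Nn ≤ T+s+1))
      have htail : (∑ k ∈ Finset.Ico Nn (T+s+1),
          (((T+s).choose k : ℂ)) • c^(T+s-k) • VA.pow y k) ∈ M :=
        Submodule.sum_mem _ (fun k hk => Submodule.smul_mem _ _ (Submodule.smul_mem _ _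
          (hM (hnil y hy k (Finset.mem_Ico.1 hk).1))))
      have hfull : (∑ k ∈ Finset.range (T+s+1),
          (((T+s).choose k : ℂ)) • c^(T+s-k) • VA.pow y k) ∈ M := by
        rw [← hexp]
        exact hpowM (T+s) (by omega)
      have := Submodule.sub_mem _ hfull htail
      rwa [hsplit, add_sub_cancel_right] at this
  -- strong radical is contained in the radical
  have hsr : VA.srad (M : Set V) ⊆ VA.rad (M : Set V) := by
    rintro v ⟨hls, hrs⟩
    obtain ⟨m, hm⟩ := hrs VA.one
    refine ⟨m, fun ns hg hlen => ?_⟩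
    have h1 := hm ns (-1) hg hlen (Or.inr rfl)
    rwa [VA.creation] at h1
  have hradeq : VA.rad (M : Set V) = (VOA.Gq 1 : Set V) :=
    Set.Subset.antisymm hradP hPrad
  have hsradeq : VA.srad (M : Set V) = (VOA.Gq 1 : Set V) :=
    Set.Subset.antisymm (hsr.trans (hradeq ▸ Set.Subset.rfl))
      (fun y hy => ⟨hPlsrad hy, hPrsrad hy⟩)
  constructor
  · rw [VertexAlgebra.IsMZ, hradeq, hsradeq]
  · rw [hradeq, hPGq]
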